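/- Shrinking loops have shrinking JM length: fix h > 0 and let c : [0,1] → {collision-free configurations} be a C¹ closed curve. Then there exist constants C > 0 and λ₀ ∈ (0,1] such that for every λ ∈ (0, λ₀], the rescaled curve λc (given by s ↦ (λc_1(s), …, λc_N(s))) lies in the collision-free Hill region {U ≥ h} and its JM length satisfies L_h(λc) ≤ C·√λ. In particular the JM length of λc tends to 0 as λ → 0. -/

import Mathlib

open Finset Filter MeasureTheory
open scoped RealInnerProductSpace

noncomputable section

/-- Configuration space of `N` bodies in `ℝ³`. -/
abbrev Config (N : ℕ) := Fin N → EuclideanSpace ℝ (Fin 3)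

/-- A configuration is collision-free if all bodies occupy distinct positions. -/
def CollisionFree {N : ℕ} (q : Config N) : Prop :=
  ∀ a b : Fin N, a ≠ b → q a ≠ q b

/-- The Newtonian potential `U(q) = G ∑_{a<b} m_a m_b / |q_a - q_b|`. -/
def potU {N : ℕ} (G : ℝ) (m : Fin N → ℝ) (q : Config N) : ℝ :=
  G * ∑ a : Fin N, ∑ b : Fin N, if a < b then m a * m b / ‖q a - q b‖ else 0

/-- Kinetic energy `K = (1/2) ∑_a m_a |v_a|²`. -/
def kinE {N : ℕ} (m : Fin N → ℝ) (v : Config N) : ℝ :=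
  (1 / 2) * ∑ a : Fin N, m a * ‖v a‖ ^ 2

/-- Moment of inertia `I = ∑_a m_a |q_a|²`. -/
def momI {N : ℕ} (m : Fin N → ℝ) (q : Config N) : ℝ :=
  ∑ a : Fin N, m a * ‖q a‖ ^ 2

/-- `q, v : ℝ → Config N` is a solution of Newton's N-body equations on `J`:
at each time in `J` the configuration is collision-free, `v` is the derivative
of `q`, and the acceleration satisfies
`m_a q̈_a = G ∑_{b ≠ a} m_a m_b (q_b - q_a)/|q_b - q_a|³`. -/
def IsSolutionOn {N : ℕ} (G : ℝ) (m : Fin N → ℝ) (J : Set ℝ)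
    (q v : ℝ → Config N) : Prop :=
  ∀ t ∈ J,
    CollisionFree (q t) ∧
    (∀ a, HasDerivAt (fun s => q s a) (v t a) t) ∧
    (∀ a, ∃ acc : EuclideanSpace ℝ (Fin 3),
      HasDerivAt (fun s => v s a) acc t ∧
      m a • acc = ∑ b ∈ univ.filter (fun b => b ≠ a),
        (G * m a * m b / ‖q t b - q t a‖ ^ 3) • (q t b - q t a))

/-- The Jacobi–Maupertuis length at energy `-h` of a path `γ : [0,1] → Config N`:
`L_h(γ) = ∫₀¹ √(2(U(γ(s)) - h)) √(∑ m_a |γ_a'(s)|²) ds`. -/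
def JMlength {N : ℕ} (G : ℝ) (m : Fin N → ℝ) (h : ℝ) (γ : ℝ → Config N) : ℝ :=
  ∫ s in (0:ℝ)..1, Real.sqrt (2 * (potU G m (γ s) - h)) *
    Real.sqrt (∑ a : Fin N, m a * ‖deriv (fun u => γ u a) s‖ ^ 2)

/-- Scaling the configuration scales the potential inversely. -/
lemma potU_smul_aux {N : ℕ} (G : ℝ) (m : Fin N → ℝ) (q : Config N) {lam : ℝ} (hl : 0 < lam) :
    potU G m (lam • q) = lam⁻¹ * potU G m q := by
  unfold potU
  have key : ∀ a b : Fin N,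
      (if a < b then m a * m b / ‖(lam • q) a - (lam • q) b‖ else 0)
      = lam⁻¹ * (if a < b then m a * m b / ‖q a - q b‖ else 0) := by
    intro a b
    by_cases hab : a < b
    · simp only [if_pos hab, Pi.smul_apply, ← smul_sub, norm_smul, Real.norm_eq_abs,
        abs_of_pos hl]
      rw [div_mul_eq_div_div_swap, div_eq_inv_mul]
    · simp [hab]
  simp only [key, ← Finset.mul_sum]
  ring

/-- The potential of a collision-free configuration is positive. -/
lemma potU_pos_aux {N : ℕ} (hN : 2 ≤ N) {G : ℝ} (hG : 0 < G) {m : Fin N → ℝ}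
    (hm : ∀ a, 0 < m a) {q : Config N} (hq : CollisionFree q) : 0 < potU G m q := by
  apply mul_pos hG
  set a0 : Fin N := ⟨0, by omega⟩ with ha0
  set a1 : Fin N := ⟨1, by omega⟩ with ha1
  have hne : a0 ≠ a1 := by simp [ha0, ha1, Fin.ext_iff]
  have hlt : a0 < a1 := by simp [ha0, ha1, Fin.lt_def]
  have hterm : ∀ a b : Fin N,
      0 ≤ (if a < b then m a * m b / ‖q a - q b‖ else 0) := by
    intro a b; split
    · exact div_nonneg (mul_nonneg (hm a).le (hm b).le) (norm_nonneg _)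
    · exact le_refl 0
  apply Finset.sum_pos' (fun a _ => Finset.sum_nonneg (fun b _ => hterm a b))
  refine ⟨a0, Finset.mem_univ _, ?_⟩
  apply Finset.sum_pos' (fun b _ => hterm a0 b)
  refine ⟨a1, Finset.mem_univ _, ?_⟩
  rw [if_pos hlt]
  exact div_pos (mul_pos (hm a0) (hm a1))
    (norm_pos_iff.2 (sub_ne_zero.2 (hq a0 a1 hne)))

/-- sqrt bookkeeping for the final estimate. -/
lemma sqrt_calc_aux {lam U B : ℝ} (hl : 0 < lam) (hU : 0 ≤ U) (hB : 0 ≤ B) :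
    Real.sqrt (2 * lam⁻¹ * U) * (lam * Real.sqrt B)
      = Real.sqrt (2 * U * B) * Real.sqrt lam := by
  have h1 : lam * Real.sqrt B = Real.sqrt (lam ^ 2 * B) := by
    rw [Real.sqrt_mul (sq_nonneg _), Real.sqrt_sq hl.le]
  have h2 : 0 ≤ 2 * lam⁻¹ * U :=
    mul_nonneg (mul_nonneg (by norm_num) (inv_nonneg.2 hl.le)) hU
  rw [h1, ← Real.sqrt_mul h2, ← Real.sqrt_mul (by positivity : (0:ℝ) ≤ 2 * U * B)]
  congr 1
  field_simp

theorem shrinking_loops_JM_length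
    (N : ℕ) (hN : 2 ≤ N) (G : ℝ) (hG : 0 < G)
    (m : Fin N → ℝ) (hm : ∀ a, 0 < m a)
    (h : ℝ) (hh : 0 < h)
    (c : ℝ → Config N) (hc : ContDiffOn ℝ 1 c (Set.Icc 0 1))
    (hclosed : c 0 = c 1)
    (hcf : ∀ s ∈ Set.Icc (0:ℝ) 1, CollisionFree (c s)) :
    ∃ C > (0:ℝ), ∃ lam₀ ∈ Set.Ioc (0:ℝ) 1, ∀ lam ∈ Set.Ioc (0:ℝ) lam₀,
      (∀ s ∈ Set.Icc (0:ℝ) 1,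
        CollisionFree (lam • c s) ∧ h ≤ potU G m (lam • c s)) ∧
      JMlength G m h (fun s => lam • c s) ≤ C * Real.sqrt lam := by
  -- continuity of U along the curve
  have hccont : ContinuousOn c (Set.Icc 0 1) := hc.continuousOn
  have hcomp : ∀ a : Fin N, ContinuousOn (fun s => c s a) (Set.Icc (0:ℝ) 1) :=
    fun a => (continuous_apply a).comp_continuousOn hccont
  have hUc : ContinuousOn (fun s => potU G m (c s)) (Set.Icc 0 1) := by
    unfold potU
    apply ContinuousOn.mul continuousOn_const
    apply continuousOn_finset_sum; intro a _
    apply continuousOn_finset_sum; intro b _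
    by_cases hab : a < b
    · simp only [if_pos hab]
      apply ContinuousOn.div continuousOn_const (((hcomp a).sub (hcomp b)).norm)
      intro s hs
      exact norm_ne_zero_iff.2 (sub_ne_zero.2 (hcf s hs a b hab.ne))
    · simp only [if_neg hab]; exact continuousOn_const
  -- min and max of U on the curve
  obtain ⟨s₀, hs₀, hmin⟩ := isCompact_Icc.exists_isMinOn
    (Set.nonempty_Icc.2 zero_le_one) hUc
  obtain ⟨s₁, hs₁, hmax⟩ := isCompact_Icc.exists_isMaxOn
    (Set.nonempty_Icc.2 zero_le_one) hUc
  set Umin := potU G m (c s₀) with hUmin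
  set Umax := potU G m (c s₁) with hUmax
  have hUminpos : 0 < Umin := potU_pos_aux hN hG hm (hcf s₀ hs₀)
  have hUmaxpos : 0 < Umax := potU_pos_aux hN hG hm (hcf s₁ hs₁)
  -- bound on derivatives
  set D := derivWithin c (Set.Icc (0:ℝ) 1) with hD
  have hDcont : ContinuousOn D (Set.Icc 0 1) :=
    hc.continuousOn_derivWithin (uniqueDiffOn_Icc zero_lt_one) le_rfl
  set F₀ : ℝ → ℝ := fun s => ∑ a : Fin N, m a * ‖D s a‖ ^ 2 with hF₀
  have hF₀cont : ContinuousOn F₀ (Set.Icc 0 1) := by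
    apply continuousOn_finset_sum; intro a _
    exact continuousOn_const.mul
      ((((continuous_apply a).comp_continuousOn hDcont).norm).pow 2)
  obtain ⟨s₂, hs₂, hFmax⟩ := isCompact_Icc.exists_isMaxOn
    (Set.nonempty_Icc.2 zero_le_one) hF₀cont
  set B := max (F₀ s₂) (∑ a : Fin N, m a * ‖deriv (fun u => c u a) 1‖ ^ 2) with hBdef
  have hBnn : 0 ≤ B :=
    le_trans (Finset.sum_nonneg fun a _ => mul_nonneg (hm a).le (sq_nonneg _)) (le_max_right _ _)
  have hB : ∀ s ∈ Set.Ioc (0:ℝ) 1,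
      (∑ a : Fin N, m a * ‖deriv (fun u => c u a) s‖ ^ 2) ≤ B := by
    intro s hs
    rcases eq_or_lt_of_le hs.2 with h1 | h1
    · rw [h1]; exact le_max_right _ _
    · have hsIoo : s ∈ Set.Ioo (0:ℝ) 1 := ⟨hs.1, h1⟩
      have hmem : Set.Icc (0:ℝ) 1 ∈ nhds s := Icc_mem_nhds hsIoo.1 hsIoo.2
      have hdiff : DifferentiableAt ℝ c s :=
        ((hc.differentiableOn one_ne_zero) s ⟨hs.1.le, hs.2⟩).differentiableAt hmem
      have hDs : D s = deriv c s := derivWithin_of_mem_nhds hmem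
      have heq : ∀ a : Fin N, deriv (fun u => c u a) s = D s a := by
        intro a
        rw [hDs]
        exact (((ContinuousLinearMap.proj (R := ℝ)
          (φ := fun _ : Fin N => EuclideanSpace ℝ (Fin 3)) a).hasFDerivAt).comp_hasDerivAt
          s hdiff.hasDerivAt).deriv
      calc (∑ a : Fin N, m a * ‖deriv (fun u => c u a) s‖ ^ 2)
          = F₀ s := by simp only [hF₀]; exact Finset.sum_congr rfl fun a _ => by rw [heq a]
        _ ≤ F₀ s₂ := hFmax ⟨hs.1.le, hs.2⟩
        _ ≤ B := le_max_left _ _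
  -- constants
  refine ⟨Real.sqrt (2 * Umax * B) + 1, by positivity,
    min 1 (Umin / h), ⟨lt_min one_pos (div_pos hUminpos hh), min_le_left _ _⟩, ?_⟩
  intro lam hlam
  have hlampos : 0 < lam := hlam.1
  have hlam1 : lam ≤ 1 := hlam.2.trans (min_le_left _ _)
  have hlamU : lam * h ≤ Umin := by
    have := hlam.2.trans (min_le_right _ _)
    calc lam * h ≤ (Umin / h) * h := by
          exact mul_le_mul_of_nonneg_right this hh.le
      _ = Umin := by field_simp
  constructor
  · intro s hs
    constructor
    · intro a b hab hEq
      refine hcf s hs a b hab ?_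
      have : lam • c s a = lam • c s b := hEq
      exact smul_right_injective _ hlampos.ne' this
    · rw [potU_smul_aux G m (c s) hlampos]
      have h1 : Umin ≤ potU G m (c s) := hmin hs
      calc h = lam⁻¹ * (lam * h) := by field_simp
        _ ≤ lam⁻¹ * Umin := by
            exact mul_le_mul_of_nonneg_left hlamU (inv_nonneg.2 hlampos.le)
        _ ≤ lam⁻¹ * potU G m (c s) :=
            mul_le_mul_of_nonneg_left h1 (inv_nonneg.2 hlampos.le)
  · -- the JM length bound
    have key : ∀ x ∈ Set.uIoc (0:ℝ) 1,
        ‖Real.sqrt (2 * (potU G m (lam • c x) - h)) *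
          Real.sqrt (∑ a : Fin N, m a * ‖deriv (fun u => (lam • c u) a) x‖ ^ 2)‖
        ≤ Real.sqrt (2 * Umax * B) * Real.sqrt lam := by
      intro x hx
      rw [Set.uIoc_of_le zero_le_one] at hx
      have hxIcc : x ∈ Set.Icc (0:ℝ) 1 := ⟨hx.1.le, hx.2⟩
      -- second factor
      have hder : ∀ a : Fin N, deriv (fun u => (lam • c u) a) x
          = lam • deriv (fun u => c u a) x := by
        intro a
        have : (fun u => (lam • c u) a) = fun u => lam • (c u a) := rfl
        rw [this, deriv_fun_const_smul_field]
      have hsum : (∑ a : Fin N, m a * ‖deriv (fun u => (lam • c u) a) x‖ ^ 2)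
          = lam ^ 2 * (∑ a : Fin N, m a * ‖deriv (fun u => c u a) x‖ ^ 2) := by
        rw [Finset.mul_sum]
        refine Finset.sum_congr rfl fun a _ => ?_
        rw [hder a, norm_smul, Real.norm_eq_abs, abs_of_pos hlampos, mul_pow]
        ring
      have hsum_le : (∑ a : Fin N, m a * ‖deriv (fun u => (lam • c u) a) x‖ ^ 2)
          ≤ lam ^ 2 * B := by
        rw [hsum]
        exact mul_le_mul_of_nonneg_left (hB x hx) (sq_nonneg _)
      have h2 : Real.sqrt (∑ a : Fin N, m a * ‖deriv (fun u => (lam • c u) a) x‖ ^ 2)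
          ≤ lam * Real.sqrt B := by
        calc Real.sqrt (∑ a : Fin N, m a * ‖deriv (fun u => (lam • c u) a) x‖ ^ 2)
            ≤ Real.sqrt (lam ^ 2 * B) := Real.sqrt_le_sqrt hsum_le
          _ = lam * Real.sqrt B := by
              rw [Real.sqrt_mul (sq_nonneg _), Real.sqrt_sq hlampos.le]
      -- first factor
      have h1 : Real.sqrt (2 * (potU G m (lam • c x) - h))
          ≤ Real.sqrt (2 * lam⁻¹ * Umax) := by
        apply Real.sqrt_le_sqrt
        rw [potU_smul_aux G m (c x) hlampos]
        have : potU G m (c x) ≤ Umax := hmax hxIcc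
        nlinarith [inv_nonneg.2 hlampos.le, hh.le]
      rw [Real.norm_eq_abs, abs_of_nonneg (mul_nonneg (Real.sqrt_nonneg _) (Real.sqrt_nonneg _))]
      calc Real.sqrt (2 * (potU G m (lam • c x) - h)) *
            Real.sqrt (∑ a : Fin N, m a * ‖deriv (fun u => (lam • c u) a) x‖ ^ 2)
          ≤ Real.sqrt (2 * lam⁻¹ * Umax) * (lam * Real.sqrt B) :=
            mul_le_mul h1 h2 (Real.sqrt_nonneg _) (Real.sqrt_nonneg _)
        _ = Real.sqrt (2 * Umax * B) * Real.sqrt lam :=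
            sqrt_calc_aux hlampos hUmaxpos.le hBnn
    have hbound := intervalIntegral.norm_integral_le_of_norm_le_const key
    calc JMlength G m h (fun s => lam • c s)
        ≤ ‖JMlength G m h (fun s => lam • c s)‖ := le_abs_self _
      _ ≤ Real.sqrt (2 * Umax * B) * Real.sqrt lam * |1 - 0| := hbound
      _ = Real.sqrt (2 * Umax * B) * Real.sqrt lam := by norm_num
      _ ≤ (Real.sqrt (2 * Umax * B) + 1) * Real.sqrt lam :=
          mul_le_mul_of_nonneg_right (by linarith) (Real.sqrt_nonneg _)
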